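/- Let λ = Σ_{i=1}^n k_i δ_i with each k_i ∈ {0,1}, and suppose there exist i < j with k_i = 0 and k_j = 1. Then for an indeterminate x, the signed Weyl-group sum Σ_{w ∈ W} (−1)^{ℓ(w)} w( e^{λ+ρ_0} ∏_{i=1}^n (1 + x e^{−δ_i}) ) = 0 in the group algebra of the weight lattice over Z[x]. -/

import Mathlib

noncomputable section

/-- The Weyl group of `sp(2n)` as signed permutations: a permutation together with a
sign pattern. -/
abbrev Wgrp (n : ℕ) := Equiv.Perm (Fin n) × (Fin n → Bool)

/-- Action of a signed permutation on the weight lattice `ℤδ₁ ⊕ … ⊕ ℤδₙ`. -/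
def wAct (n : ℕ) (w : Wgrp n) (mu : Fin n → ℤ) : Fin n → ℤ :=
  fun i => if w.2 i then -(mu (w.1⁻¹ i)) else mu (w.1⁻¹ i)

/-- `(−1)^{ℓ(w)}` for a signed permutation: the determinant `sign(σ)·(−1)^{#signs}`. -/
def sgn (n : ℕ) (w : Wgrp n) : ℤ :=
  (Equiv.Perm.sign w.1 : ℤ) * (-1) ^ (Finset.univ.filter (fun i => w.2 i = true)).card

/-- `ρ₀ = Σ_{i=1}^n (n−i+1) δᵢ` (0-based: `ρ₀ i = n − i`). -/
def rho0 (n : ℕ) : Fin n → ℤ := fun i => (n : ℤ) - i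

/-- `δᵢ` as a lattice vector. -/
def delta (n : ℕ) (i : Fin n) : Fin n → ℤ := Pi.single i 1

/-- The group algebra over `ℤ[x]` of the weight lattice of `sp(2n)`. -/
abbrev GA (n : ℕ) := AddMonoidAlgebra (Polynomial ℤ) (Fin n → ℤ)

/-! ### Auxiliary material -/

/-- `wAct` as an additive homomorphism. -/
def wActHom (n : ℕ) (w : Wgrp n) : (Fin n → ℤ) →+ (Fin n → ℤ) where
  toFun := wAct n w
  map_zero' := by funext i; simp [wAct]
  map_add' := fun x y => by funext i; simp only [wAct, Pi.add_apply]; split <;> ring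

lemma exists_adjacent (n : ℕ) (k : Fin n → ℤ) (h01 : ∀ i, k i = 0 ∨ k i = 1)
    (hij : ∃ i j : Fin n, i < j ∧ k i = 0 ∧ k j = 1) :
    ∃ a b : Fin n, (a : ℕ) + 1 = (b : ℕ) ∧ k a = 0 ∧ k b = 1 := by
  classical
  obtain ⟨i, j, hlt, hki, hkj⟩ := hij
  set A : Finset (Fin n) := Finset.univ.filter (fun l => l < j ∧ k l = 0) with hAdef
  have hA : i ∈ A := by simp [hAdef, hlt, hki]
  have hAne : A.Nonempty := ⟨i, hA⟩
  set a := A.max' hAne with hadef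
  have ha : a < j ∧ k a = 0 := by
    exact (Finset.mem_filter.mp (A.max'_mem hAne)).2
  have hb : (a : ℕ) + 1 < n := lt_of_le_of_lt (Nat.succ_le_of_lt ha.1) j.isLt
  set b : Fin n := ⟨(a : ℕ) + 1, hb⟩ with hbdef
  have hbv : (b : ℕ) = (a : ℕ) + 1 := rfl
  refine ⟨a, b, rfl, ha.2, ?_⟩
  by_cases hbj : b = j
  · rw [hbj]; exact hkj
  · have haj : (a : ℕ) < (j : ℕ) := ha.1
    have hbj' : (b : ℕ) ≠ (j : ℕ) := fun hc => hbj (Fin.ext hc)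
    have hblt : b < j := by rw [Fin.lt_def]; omega
    rcases h01 b with h | h
    · exfalso
      have hmem : b ∈ A := by simp [hAdef, hblt, h]
      have hle := A.le_max' _ hmem
      have hle' : (b : ℕ) ≤ (a : ℕ) := hle
      omega
    · exact h

lemma mapDomain_tau_fixed (n : ℕ) (k : Fin n → ℤ) (a b : Fin n)
    (hab : (a : ℕ) + 1 = (b : ℕ)) (hka : k a = 0) (hkb : k b = 1) :
    Finsupp.mapDomain (wAct n (Equiv.swap a b, fun _ => false))
      (AddMonoidAlgebra.coeff ((AddMonoidAlgebra.single (k + rho0 n) 1 : GA n) *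
        ∏ i : Fin n,
          (1 + AddMonoidAlgebra.single (-(delta n i)) (Polynomial.X : Polynomial ℤ)))) =
    AddMonoidAlgebra.coeff ((AddMonoidAlgebra.single (k + rho0 n) 1 : GA n) *
        ∏ i : Fin n,
          (1 + AddMonoidAlgebra.single (-(delta n i)) (Polynomial.X : Polynomial ℤ))) := by
  classical
  set τ : Wgrp n := (Equiv.swap a b, fun _ => false) with hτ
  set φ := AddMonoidAlgebra.mapDomainRingHom (Polynomial ℤ) (wActHom n τ) with hφ
  have hτapp : ∀ mu : Fin n → ℤ, wAct n τ mu = mu ∘ (Equiv.swap a b) := by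
    intro mu; funext l
    simp [wAct, hτ, Equiv.symm_apply_eq]
  have hμ : wAct n τ (k + rho0 n) = k + rho0 n := by
    rw [hτapp]
    funext l
    simp only [Function.comp_apply, Pi.add_apply]
    have hba : ((b : ℕ) : ℤ) = ((a : ℕ) : ℤ) + 1 := by exact_mod_cast hab.symm
    rcases eq_or_ne l a with h | hla
    · rw [h, Equiv.swap_apply_left]
      simp only [rho0, hka, hkb]
      omega
    · rcases eq_or_ne l b with h | hlb
      · rw [h, Equiv.swap_apply_right]
        simp only [rho0, hka, hkb]
        omega
      · rw [Equiv.swap_apply_of_ne_of_ne hla hlb]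
  have hδ : ∀ l : Fin n, wAct n τ (-(delta n l)) = -(delta n (Equiv.swap a b l)) := by
    intro l
    rw [hτapp]
    funext m
    simp only [Function.comp_apply, Pi.neg_apply, delta]
    rcases eq_or_ne (Equiv.swap a b m) l with h | h
    · have hm : m = Equiv.swap a b l := by
        rw [← h]; simp
      rw [h, hm]
      simp
    · have hm : m ≠ Equiv.swap a b l := by
        intro hc; apply h; rw [hc]; simp
      rw [Pi.single_eq_of_ne h, Pi.single_eq_of_ne hm]
  have hφdef : ∀ x : GA n, (φ x).coeff = Finsupp.mapDomain (wAct n τ) x.coeff := fun _ => rfl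
  have hφs : ∀ (m : Fin n → ℤ) (r : Polynomial ℤ), φ (AddMonoidAlgebra.single m r) =
      AddMonoidAlgebra.single (wAct n τ m) r := fun m r => by
    show AddMonoidAlgebra.mapDomain (wAct n τ) (AddMonoidAlgebra.single m r) = _
    rw [AddMonoidAlgebra.mapDomain_single]
  rw [← hφdef, map_mul, map_prod]
  have h1 : φ (AddMonoidAlgebra.single (k + rho0 n) 1) =
      AddMonoidAlgebra.single (k + rho0 n) 1 := by
    rw [hφs, hμ]
  rw [h1]
  congr 1
  congr 1
  have h2 : ∀ l : Fin n,
      φ (1 + AddMonoidAlgebra.single (-(delta n l)) (Polynomial.X : Polynomial ℤ)) =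
      1 + AddMonoidAlgebra.single (-(delta n (Equiv.swap a b l)))
        (Polynomial.X : Polynomial ℤ) := by
    intro l
    rw [map_add, map_one, hφs, hδ]
  calc ∏ l : Fin n, φ (1 + AddMonoidAlgebra.single (-(delta n l)) (Polynomial.X : Polynomial ℤ))
      = ∏ l : Fin n, (1 + AddMonoidAlgebra.single (-(delta n (Equiv.swap a b l)))
          (Polynomial.X : Polynomial ℤ)) := by
        exact Finset.prod_congr rfl (fun l _ => h2 l)
    _ = ∏ l : Fin n, (1 + AddMonoidAlgebra.single (-(delta n l))
          (Polynomial.X : Polynomial ℤ)) :=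
        Equiv.prod_comp (Equiv.swap a b)
          (fun l => 1 + AddMonoidAlgebra.single (-(delta n l)) (Polynomial.X : Polynomial ℤ))

/-- if `λ = Σ kᵢδᵢ` with `kᵢ ∈ {0,1}` and `kᵢ = 0, kⱼ = 1` for some
`i < j`, then `Σ_{w∈W} (−1)^{ℓ(w)} w(e^{λ+ρ₀} ∏ᵢ (1 + x e^{−δᵢ})) = 0`. -/
theorem weyl_sum_eq_zero (n : ℕ) (k : Fin n → ℤ)
    (h01 : ∀ i, k i = 0 ∨ k i = 1)
    (hij : ∃ i j : Fin n, i < j ∧ k i = 0 ∧ k j = 1) :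
    ∑ w : Wgrp n, sgn n w •
      Finsupp.mapDomain (wAct n w)
        (AddMonoidAlgebra.coeff ((AddMonoidAlgebra.single (k + rho0 n) 1 : GA n) *
          ∏ i : Fin n,
            (1 + AddMonoidAlgebra.single (-(delta n i)) (Polynomial.X : Polynomial ℤ)))) =
      0 := by
  classical
  obtain ⟨a, b, hab, hka, hkb⟩ := exists_adjacent n k h01 hij
  have hne : a ≠ b := by
    intro h; apply_fun (Fin.val) at h; omega
  set F : GA n := (AddMonoidAlgebra.single (k + rho0 n) 1 : GA n) *
      ∏ i : Fin n,
        (1 + AddMonoidAlgebra.single (-(delta n i)) (Polynomial.X : Polynomial ℤ)) with hF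
  set τ : Wgrp n := (Equiv.swap a b, fun _ => false) with hτ
  set S : (Fin n → ℤ) →₀ Polynomial ℤ :=
    ∑ w : Wgrp n, sgn n w • Finsupp.mapDomain (wAct n w) F.coeff with hS
  -- the reindexing equivalence
  set e : Wgrp n ≃ Wgrp n :=
    (Equiv.mulRight (Equiv.swap a b)).prodCongr (Equiv.refl (Fin n → Bool)) with he
  have hcomp : ∀ w : Wgrp n, wAct n (e w) = wAct n w ∘ wAct n τ := by
    intro w
    funext mu l
    simp only [Function.comp_apply, wAct, he, hτ, Equiv.prodCongr_apply, Equiv.coe_refl,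
      Prod.map, id_eq, Equiv.coe_mulRight, mul_inv_rev, Equiv.Perm.mul_apply, if_false]
    rfl
  have hsgn : ∀ w : Wgrp n, sgn n (e w) = - sgn n w := by
    intro w
    simp only [sgn, he, Equiv.prodCongr_apply, Equiv.coe_refl, Prod.map, id_eq,
      Equiv.coe_mulRight, Equiv.Perm.sign_mul, Equiv.Perm.sign_swap hne]
    push_cast
    ring
  have hFfix : Finsupp.mapDomain (wAct n τ) F.coeff = F.coeff :=
    mapDomain_tau_fixed n k a b hab hka hkb
  have hterm : ∀ w : Wgrp n,
      sgn n (e w) • Finsupp.mapDomain (wAct n (e w)) F.coeff =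
      - (sgn n w • Finsupp.mapDomain (wAct n w) F.coeff) := by
    intro w
    rw [hcomp, Finsupp.mapDomain_comp, hFfix, hsgn, neg_smul]
  have hSS : S = -S := by
    conv_lhs => rw [hS, ← Equiv.sum_comp e
      (fun w => sgn n w • Finsupp.mapDomain (wAct n w) F.coeff)]
    rw [hS, ← Finset.sum_neg_distrib]
    exact Finset.sum_congr rfl (fun w _ => hterm w)
  have hS0 : S = 0 := by
    apply Finsupp.ext
    intro m
    have hm := DFunLike.congr_fun hSS m
    rw [Finsupp.neg_apply] at hm
    have h2 : S m + S m = 0 := by nth_rewrite 1 [hm]; ring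
    simpa using add_self_eq_zero.mp h2
  exact hS0
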